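/- Let q be an odd prime power, m > 1 odd, and A = {x ∈ F_{q^m}* : Tr_{q^m/q}(x²) = 0}. Choose a_1 ∈ A and inductively a_ℓ ∈ A ∩ H_1 ∩ ... ∩ H_{ℓ−1}, where H_ℓ = {x ∈ F_{q^m}* : Tr_{q^m/q}(x a_ℓ) = 0}, with a_1, ..., a_ℓ linearly independent over F_q. Then for 1 ≤ ℓ ≤ (m−1)/2, |A ∩ H_1 ∩ ... ∩ H_ℓ| = q^{m−ℓ−1} − 1. -/

import Mathlib

open Finset

private lemma addchar_map_sum {F R' : Type*} [AddCommMonoid F] [CommMonoid R'] (ψ : AddChar F R')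
    {ι : Type*} (s : Finset ι) (f : ι → F) : ψ (∑ i ∈ s, f i) = ∏ i ∈ s, ψ (f i) := by
  classical
  induction s using Finset.induction with
  | empty => simp
  | insert _ _ h ih => rw [Finset.sum_insert h, Finset.prod_insert h, AddChar.map_add_eq_mul, ih]

private lemma diag_count (F : Type) [Field F] [Fintype F] [DecidableEq F]
    (hF2 : ringChar F ≠ 2) (n : ℕ) (hn : Odd n) (b : Fin n → F) (hb : ∀ i, b i ≠ 0) :
    Fintype.card F * Fintype.card {x : Fin n → F // ∑ i, b i * x i ^ 2 = 0}
      = Fintype.card F ^ n := by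
  have hchar : ringChar ℚ ≠ ringChar F := by
    have h0 : ringChar ℚ = 0 := ringChar.eq ℚ 0
    have hprime := CharP.char_is_prime F (ringChar F)
    rw [h0]
    exact fun h => hprime.ne_zero h.symm
  set q := Fintype.card F with hq
  let PC := AddChar.FiniteField.primitiveChar F ℚ hchar
  let R' := CyclotomicField PC.n ℚ
  let ψ : AddChar F R' := PC.char
  have hψ : ψ.IsPrimitive := PC.prim
  let χ : MulChar F R' := (quadraticChar F).ringHomComp (Int.castRingHom R')
  have hχ : ∀ t : F, χ t = ((quadraticChar F t : ℤ) : R') := fun t => rfl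
  have hχ0 : χ 0 = 0 := by rw [hχ]; simp
  have hχsq : ∀ t : F, t ≠ 0 → χ t * χ t = 1 := by
    intro t ht
    rcases quadraticChar_dichotomy ht with h | h <;> rw [hχ, h] <;> norm_num
  have hχsum : ∑ t : F, χ t = 0 := by
    simp_rw [hχ]
    rw [← Int.cast_sum, quadraticChar_sum_zero hF2, Int.cast_zero]
  -- the inner one-variable sum
  have inner : ∀ c : F, c ≠ 0 → ∑ y : F, ψ (c * y ^ 2) = χ c * gaussSum χ ψ := by
    intro c hc
    have fib : ∑ y : F, ψ (c * y ^ 2)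
        = ∑ z : F, ((#{y : F | y ^ 2 = z}.toFinset : ℕ) : R') * ψ (c * z) := by
      rw [← Finset.sum_fiberwise univ (fun y : F => y ^ 2) (fun y => ψ (c * y ^ 2))]
      refine Finset.sum_congr rfl fun z _ => ?_
      rw [Finset.sum_congr rfl (fun y hy => by
        rw [(Finset.mem_filter.mp hy).2]), Finset.sum_const, nsmul_eq_mul]
      congr 2
      rw [Set.toFinset_setOf]
    have h1 : ∀ z : F, ((#{y : F | y ^ 2 = z}.toFinset : ℕ) : R') = χ z + 1 := by
      intro z
      have h := quadraticChar_card_sqrts hF2 z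
      rw [hχ]
      exact_mod_cast congrArg (fun i : ℤ => (i : R')) h
    rw [fib]
    simp_rw [h1, add_mul, one_mul]
    rw [Finset.sum_add_distrib]
    have h2 : ∑ z : F, ψ (c * z) = 0 := by
      have h := AddChar.sum_mulShift c hψ
      rw [if_neg hc] at h
      norm_num at h
      rw [← h]
      exact Finset.sum_congr rfl fun z _ => by rw [mul_comm]
    have h3 : ∑ z : F, χ z * ψ (c * z) = gaussSum χ (AddChar.mulShift ψ c) := by
      simp [gaussSum, AddChar.mulShift_apply]
    rw [h2, h3, add_zero]
    have hu := gaussSum_mulShift χ ψ (Units.mk0 c hc)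
    calc gaussSum χ (AddChar.mulShift ψ c)
        = (χ c * χ c) * gaussSum χ (AddChar.mulShift ψ c) := by rw [hχsq c hc, one_mul]
      _ = χ c * gaussSum χ ψ := by rw [mul_assoc]; rw [show ((Units.mk0 c hc : Fˣ) : F) = c from rfl] at hu; rw [hu]
  have hcard : Fintype.card (Fin n → F) = q ^ n := by simp [hq]
  -- main double sum
  have key : (q : R') * (Fintype.card {x : Fin n → F // ∑ i, b i * x i ^ 2 = 0} : ℕ)
      = (q : R') ^ n := by
    have lhs1 : ∑ x : Fin n → F, ∑ t : F, ψ (t * ∑ i, b i * x i ^ 2)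
        = (q : R') * (Fintype.card {x : Fin n → F // ∑ i, b i * x i ^ 2 = 0} : ℕ) := by
      have e1 : ∀ x : Fin n → F, ∑ t : F, ψ (t * ∑ i, b i * x i ^ 2)
          = ((if (∑ i, b i * x i ^ 2) = 0 then q else 0 : ℕ) : R') := fun x =>
        AddChar.sum_mulShift _ hψ
      simp_rw [e1]
      rw [← Nat.cast_sum]
      rw [Finset.sum_ite, Finset.sum_const, Finset.sum_const_zero, add_zero, smul_eq_mul,
        Fintype.card_subtype]
      push_cast
      ring
    have tterm : ∀ t : F, t ≠ 0 → ∑ x : Fin n → F, ψ (t * ∑ i, b i * x i ^ 2)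
        = χ t * ((∏ i, χ (b i)) * gaussSum χ ψ ^ n) := by
      intro t ht
      have expand : ∀ x : Fin n → F, ψ (t * ∑ i, b i * x i ^ 2)
          = ∏ i, ψ ((t * b i) * x i ^ 2) := by
        intro x
        rw [Finset.mul_sum, addchar_map_sum]
        exact Finset.prod_congr rfl fun i _ => by ring_nf
      simp_rw [expand]
      rw [← Fintype.prod_sum (R := CyclotomicField PC.n ℚ) (fun i (y : F) => ψ ((t * b i) * y ^ 2))]
      have e2 : ∀ i : Fin n, ∑ y : F, ψ ((t * b i) * y ^ 2)
          = (χ t * χ (b i)) * gaussSum χ ψ := by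
        intro i
        rw [inner _ (mul_ne_zero ht (hb i)), map_mul]
      rw [Finset.prod_congr rfl fun i _ => e2 i]
      rw [Finset.prod_mul_distrib, Finset.prod_mul_distrib, Finset.prod_const, Finset.prod_const,
        Finset.card_univ, Fintype.card_fin]
      have e3 : (χ t) ^ n = χ t := by
        obtain ⟨k, hk⟩ := hn
        rw [hk, pow_succ, pow_mul, pow_two, hχsq t ht, one_pow, one_mul]
      rw [e3, mul_assoc]
    rw [← lhs1, Finset.sum_comm, ← Finset.add_sum_erase univ _ (Finset.mem_univ (0 : F))]
    have t0 : ∑ x : Fin n → F, ψ ((0 : F) * ∑ i, b i * x i ^ 2) = (q : R') ^ n := by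
      have : ∀ x : Fin n → F, ψ ((0 : F) * ∑ i, b i * x i ^ 2) = 1 := by
        intro x; rw [zero_mul, AddChar.map_zero_eq_one]
      simp_rw [this]
      rw [Finset.sum_const, Finset.card_univ, hcard, nsmul_eq_mul, mul_one]
      push_cast
      ring
    have trest : ∑ t ∈ univ.erase (0 : F), ∑ x : Fin n → F, ψ (t * ∑ i, b i * x i ^ 2) = 0 := by
      rw [Finset.sum_congr rfl (fun t ht => tterm t (Finset.ne_of_mem_erase ht)), ← Finset.sum_mul]
      have : ∑ t ∈ univ.erase (0 : F), χ t = 0 := by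
        have h := hχsum
        rw [← Finset.add_sum_erase univ _ (Finset.mem_univ (0 : F)), hχ0, zero_add] at h
        exact h
      rw [this, zero_mul]
    rw [t0, trest, add_zero]
  have : ((q * Fintype.card {x : Fin n → F // ∑ i, b i * x i ^ 2 = 0} : ℕ) : R')
      = ((q ^ n : ℕ) : R') := by rw [Nat.cast_mul (α := CyclotomicField PC.n ℚ), Nat.cast_pow (α := CyclotomicField PC.n ℚ)]; exact key
  exact_mod_cast this

open Module Finset

private lemma bilin_count (F : Type) [Field F] [Fintype F] [DecidableEq F]
    (hF2 : ringChar F ≠ 2)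
    (V : Type) [AddCommGroup V] [Module F V] [FiniteDimensional F V]
    (B : LinearMap.BilinForm F V) (hsymm : B.IsSymm) (hnd : B.Nondegenerate)
    (hodd : Odd (finrank F V))
    (hdiag : ∀ n (_ : Odd n) (b : Fin n → F) (_ : ∀ i, b i ≠ 0),
      Fintype.card F * Fintype.card {x : Fin n → F // ∑ i, b i * x i ^ 2 = 0}
        = Fintype.card F ^ n) :
    Nat.card {v : V // B v v = 0} = Fintype.card F ^ (finrank F V - 1) := by
  have h2 : Invertible (2 : F) := by
    apply invertibleOfRingCharNotDvd
    intro hdvd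
    have hp : (ringChar F).Prime := CharP.char_is_prime F _
    exact hF2 ((Nat.prime_dvd_prime_iff_eq hp Nat.prime_two).mp hdvd)
  obtain ⟨v, hv⟩ := LinearMap.BilinForm.exists_orthogonal_basis (LinearMap.BilinForm.isSymm_iff.mp hsymm)
  have hortho : ∀ i j, i ≠ j → B (v i) (v j) = 0 := fun i j hij => hv hij
  set b : Fin (finrank F V) → F := fun i => B (v i) (v i) with hb
  have hbne : ∀ i, b i ≠ 0 := by
    intro i hbi
    have hzero : ∀ y : V, B (v i) y = 0 := by
      intro y
      have hy := Basis.sum_equivFun v y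
      rw [← hy, map_sum]
      refine Finset.sum_eq_zero fun j _ => ?_
      rw [map_smul, smul_eq_mul]
      rcases eq_or_ne i j with rfl | hij
      · rw [show (B (v i)) (v i) = 0 from hbi, mul_zero]
      · rw [hortho i j hij, mul_zero]
    exact v.ne_zero i (hnd.1 (v i) hzero)
  have hquad : ∀ x : V, B x x = ∑ i, b i * (v.equivFun x i) ^ 2 := by
    intro x
    conv_lhs => rw [← Basis.sum_equivFun v x]
    rw [LinearMap.BilinForm.sum_left]
    refine Finset.sum_congr rfl fun i _ => ?_
    rw [LinearMap.BilinForm.smul_left]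
    have : (B (v i)) (∑ j, v.equivFun x j • v j)
        = v.equivFun x i * B (v i) (v i) := by
      rw [map_sum]
      rw [Finset.sum_eq_single i]
      · rw [map_smul, smul_eq_mul]
      · intro j _ hji
        rw [map_smul, smul_eq_mul, hortho i j (Ne.symm hji), mul_zero]
      · intro h; exact absurd (Finset.mem_univ i) h
    rw [this]
    ring
  have hequiv : {x : V // B x x = 0} ≃ {y : Fin (finrank F V) → F // ∑ i, b i * y i ^ 2 = 0} := by
    refine (v.equivFun.toEquiv).subtypeEquiv fun x => ?_
    rw [hquad x]
    rfl
  rw [Nat.card_congr hequiv, Nat.card_eq_fintype_card]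
  have hkey := hdiag (finrank F V) hodd b hbne
  have hq0 : 0 < Fintype.card F := Fintype.card_pos
  have hn1 : 0 < finrank F V := hodd.pos
  have hpow : Fintype.card F ^ (finrank F V) = Fintype.card F * Fintype.card F ^ (finrank F V - 1) := by
    conv_lhs => rw [← Nat.succ_pred_eq_of_pos hn1]
    rw [pow_succ']
    rfl
  rw [hpow] at hkey
  exact Nat.eq_of_mul_eq_mul_left hq0 hkey

open Module Finset




/-- Successive tangent-hyperplane sections of the parabolic quadric
`A = {x ∈ F_{q^m}* : Tr(x²) = 0}` (`q` odd, `m > 1` odd).  If `a_1, …` are linearly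
independent over `F_q` with each `a_ℓ ∈ A ∩ H_1 ∩ ⋯ ∩ H_{ℓ−1}`, where
`H_ℓ = {x ∈ F_{q^m}* : Tr(x a_ℓ) = 0}`, then for `1 ≤ ℓ ≤ (m−1)/2`,
`|A ∩ H_1 ∩ ⋯ ∩ H_ℓ| = q^{m−ℓ−1} − 1`. -/
theorem card_quadric_cone_section
    (q m : ℕ) (hq1 : 1 < q) (hqodd : Odd q) (hm1 : 1 < m) (hmodd : Odd m)
    (F : Type) [Field F] [Fintype F] (hF : Fintype.card F = q)
    (K : Type) [Field K] [Fintype K] [Algebra F K]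
    (hK : Fintype.card K = q ^ m)
    (a : Fin ((m - 1) / 2) → K) (ha : LinearIndependent F a)
    (hamem : ∀ i : Fin ((m - 1) / 2),
      a i ≠ 0 ∧ Algebra.trace F K (a i ^ 2) = 0 ∧
        ∀ j : Fin ((m - 1) / 2), j < i → Algebra.trace F K (a i * a j) = 0) :
    ∀ ℓ : ℕ, 1 ≤ ℓ → ℓ ≤ (m - 1) / 2 →
      Nat.card {x : K // x ≠ 0 ∧ Algebra.trace F K (x ^ 2) = 0 ∧
          ∀ i : Fin ((m - 1) / 2), (i : ℕ) < ℓ → Algebra.trace F K (x * a i) = 0} =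
        q ^ (m - ℓ - 1) - 1 := by
  intro ℓ hℓ1 hℓ2
  classical
  have hq0 : 0 < q := by omega
  have hqq2 : q % 2 = 1 := Nat.odd_iff.mp hqodd
  have hm2 : m % 2 = 1 := Nat.odd_iff.mp hmodd
  obtain ⟨r, hr⟩ := hmodd
  have hml : 2 * ℓ + 1 ≤ m := by
    have : 2 * ℓ ≤ m - 1 := by
      calc 2 * ℓ ≤ 2 * ((m - 1) / 2) := by omega
        _ ≤ m - 1 := Nat.mul_div_le _ _
    omega
  have hm : finrank F K = m := by
    have h := card_eq_pow_finrank (K := F) (V := K)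
    rw [hF, hK] at h
    exact (Nat.pow_right_injective hq1 h.symm)
  have hF2 : ringChar F ≠ 2 := by
    intro h
    have h2 := FiniteField.even_card_iff_char_two.mp h
    rw [hF] at h2
    omega
  set B := Algebra.traceForm F K with hB
  have hBapp : ∀ x y : K, B x y = Algebra.trace F K (x * y) := fun x y => rfl
  have hsymm : B.IsSymm := Algebra.traceForm_isSymm (R := F) (S := K)
  have hBsymm : ∀ x y : K, B x y = B y x := fun x y => by
    simpa using hsymm.eq x y
  have hnd : B.Nondegenerate := traceForm_nondegenerate F K
  have hrefl : B.IsRefl := hsymm.isRefl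
  -- the isotropic subspace spanned by a_1, ..., a_ℓ
  set a' : Fin ℓ → K := fun i => a (Fin.castLE hℓ2 i) with ha'
  have ha'li : LinearIndependent F a' := ha.comp _ (Fin.castLE_injective hℓ2)
  set W := Submodule.span F (Set.range a') with hW
  have hWrank : finrank F W = ℓ := by
    rw [hW, finrank_span_eq_card ha'li, Fintype.card_fin]
  have hgen : ∀ i j : Fin ℓ, B (a' i) (a' j) = 0 := by
    intro i j
    rw [hBapp]
    rcases lt_trichotomy (Fin.castLE hℓ2 j) (Fin.castLE hℓ2 i) with h | h | h
    · exact (hamem _).2.2 _ h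
    · have hji : j = i := Fin.castLE_injective hℓ2 h
      subst hji
      rw [← pow_two]
      exact (hamem _).2.1
    · rw [mul_comm]
      exact (hamem _).2.2 _ h
  have htot : ∀ x ∈ W, ∀ y ∈ W, B x y = 0 := by
    intro x hx y hy
    induction hx, hy using Submodule.span_induction₂ with
    | mem_mem x y hx hy =>
      obtain ⟨i, rfl⟩ := hx; obtain ⟨j, rfl⟩ := hy; exact hgen i j
    | zero_left y hy => simp
    | zero_right x hx => simp
    | add_left x y z hx hy hz h1 h2 => rw [map_add, LinearMap.add_apply, h1, h2, add_zero]
    | add_right x y z hx hy hz h1 h2 => rw [map_add, h1, h2, add_zero]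
    | smul_left r x y hx hy h1 => rw [map_smul, LinearMap.smul_apply, h1, smul_zero]
    | smul_right r x y hx hy h1 => rw [map_smul, h1, smul_zero]
  have hWle : W ≤ B.orthogonal W := fun x hx n hn => htot n hn x hx
  set V := B.orthogonal W with hV
  have hVrank : finrank F V = m - ℓ := by
    rw [hV, LinearMap.BilinForm.finrank_orthogonal hnd, hm, hWrank]
  -- membership characterization
  have hmemV : ∀ x : K, x ∈ V ↔
      ∀ i : Fin ((m - 1) / 2), (i : ℕ) < ℓ → Algebra.trace F K (x * a i) = 0 := by
    intro x
    constructor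
    · intro hx i hi
      have hai : a i ∈ Set.range a' := ⟨⟨(i : ℕ), hi⟩, congrArg a (Fin.ext rfl)⟩
      have := hx (a i) (Submodule.subset_span hai)
      rw [mul_comm]
      exact this
    · intro hx n hn
      induction hn using Submodule.span_induction with
      | mem z hz =>
        obtain ⟨j, rfl⟩ := hz
        show B (a' j) x = 0
        rw [hBsymm, hBapp]
        exact hx (Fin.castLE hℓ2 j) (by simpa using j.2)
      | zero => simp [LinearMap.BilinForm.IsOrtho]
      | add u v hu hv h1 h2 =>
        show B (u + v) x = 0
        rw [map_add, LinearMap.add_apply, h1, h2, add_zero]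
      | smul r u hu h1 =>
        show B (r • u) x = 0
        rw [map_smul, LinearMap.smul_apply, h1, smul_zero]
  -- work inside V
  set W' : Submodule F ↥V := W.comap V.subtype with hW'
  have hW'rank : finrank F ↥W' = ℓ := by
    rw [← hWrank]
    exact (Submodule.comapSubtypeEquivOfLe hWle).finrank_eq
  obtain ⟨U, hU⟩ := Submodule.exists_isCompl W'
  have hUrank : finrank F ↥U = m - 2 * ℓ := by
    have h := Submodule.finrank_add_eq_of_isCompl hU
    rw [hW'rank, hVrank] at h
    omega
  have hWV : ∀ w ∈ W, ∀ v ∈ V, B w v = 0 := fun w hw v hv => hv w hw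
  set BV := B.restrict V with hBV
  have hBVapp : ∀ x y : ↥V, BV x y = B (x : K) (y : K) := fun x y => rfl
  set BU := BV.restrict U with hBU
  have hBUapp : ∀ x y : ↥U, BU x y = B (((x : ↥V)) : K) (((y : ↥V)) : K) := fun x y => rfl
  have hBUsymm : BU.IsSymm := by
    refine ⟨fun x y => ?_⟩
    rw [hBUapp, hBUapp]
    simpa using hBsymm _ _
  have hBUnd : BU.Nondegenerate := by
    suffices hL : BU.SeparatingLeft from
      ⟨hL, fun u hu => hL u fun y => by rw [hBUsymm.eq]; exact hu y⟩
    intro u hu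
    have hxmem : (((u : ↥V)) : K) ∈ V := (u : ↥V).2
    have hx : ∀ y : ↥V, B (((u : ↥V)) : K) ((y : K)) = 0 := by
      intro y
      have hytop : y ∈ W' ⊔ U := by
        rw [codisjoint_iff.mp hU.codisjoint]
        trivial
      obtain ⟨w, hw, u', hu', hy⟩ := Submodule.mem_sup.mp hytop
      rw [← hy]
      have hcoe : (((w + u' : ↥V)) : K) = ((w : K)) + ((u' : K)) := rfl
      rw [hcoe, map_add]
      have h1 : B (((u : ↥V)) : K) ((w : K)) = 0 := by
        rw [hBsymm]
        exact hWV _ hw _ hxmem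
      have h2 : B (((u : ↥V)) : K) ((u' : K)) = 0 := hu ⟨u', hu'⟩
      rw [h1, h2, add_zero]
    have hxW : (((u : ↥V)) : K) ∈ W := by
      have hmem : (((u : ↥V)) : K) ∈ B.orthogonal V := by
        intro n hn
        show B n _ = 0
        rw [hBsymm]
        exact hx ⟨n, hn⟩
      rwa [show B.orthogonal V = W from by
        rw [hV]; exact LinearMap.BilinForm.orthogonal_orthogonal hnd hrefl W] at hmem
    have huW' : (u : ↥V) ∈ W' := hxW
    have huU : (u : ↥V) ∈ U := (u : ↥U).2
    have : (u : ↥V) = 0 := by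
      have := hU.disjoint
      rw [Submodule.disjoint_def] at this
      exact this _ huW' huU
    exact Subtype.ext this
  have hUodd : Odd (finrank F ↥U) := by
    rw [hUrank]
    exact ⟨r - ℓ, by omega⟩
  have NU : Nat.card {v : ↥U // BU v v = 0} = q ^ (m - 2 * ℓ - 1) := by
    rw [bilin_count F hF2 ↥U BU hBUsymm hBUnd hUodd
      (fun n hn b hb => diag_count F hF2 n hn b hb), hF, hUrank]
  -- splitting V as W' × U
  set e := Submodule.prodEquivOfIsCompl W' U hU with he
  have hQe : ∀ p : W' × U, BV (e p) (e p) = BU p.2 p.2 := by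
    rintro ⟨w, u⟩
    have hev : ((e (w, u) : ↥V) : K) = ((w : ↥V) : K) + ((u : ↥V) : K) := rfl
    have hwW : (((w : ↥V)) : K) ∈ W := w.2
    have huV : (((u : ↥V)) : K) ∈ V := (u : ↥V).2
    rw [hBVapp, hev]
    simp only [map_add, LinearMap.add_apply]
    rw [htot _ hwW _ hwW, hWV _ hwW _ huV, show B (((u : ↥V)) : K) (((w : ↥V)) : K) = 0 from by
      rw [hBsymm]; exact hWV _ hwW _ huV, hBUapp]
    ring
  have hcount1 : Nat.card {x : ↥V // BV x x = 0}
      = Nat.card ↥W' * Nat.card {u : ↥U // BU u u = 0} := by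
    have e1 : {p : W' × U // BU p.2 p.2 = 0} ≃ {x : ↥V // BV x x = 0} :=
      (e.toEquiv).subtypeEquiv (fun p => by
        have h : BV (e.toEquiv p) (e.toEquiv p) = BU p.2 p.2 := hQe p
        rw [h])
    have e2 : {p : W' × U // BU p.2 p.2 = 0} ≃ ↥W' × {u : ↥U // BU u u = 0} :=
      ⟨fun p => (p.1.1, ⟨p.1.2, p.2⟩), fun x => ⟨(x.1, x.2.1), x.2.2⟩,
       fun p => rfl, fun x => rfl⟩
    rw [Nat.card_congr (e1.symm.trans e2), Nat.card_prod]
  have hcardW' : Nat.card ↥W' = q ^ ℓ := by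
    have : Fintype ↥W' := Fintype.ofFinite _
    rw [Nat.card_eq_fintype_card, card_eq_pow_finrank (K := F) (V := ↥W'), hF, hW'rank]
  -- the quadric inside V as a set in K
  set s : Set K := {x | x ∈ V ∧ Algebra.trace F K (x ^ 2) = 0} with hs
  have htr : ∀ x : K, Algebra.trace F K (x ^ 2) = B x x := by
    intro x
    rw [hBapp, pow_two]
  have e3 : ↥s ≃ {x : ↥V // BV x x = 0} :=
    ⟨fun x => ⟨⟨x.1, x.2.1⟩, by have h := x.2.2; rwa [htr] at h⟩,
     fun y => ⟨y.1.1, y.1.2, by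
      have h : B ((y.1 : K)) ((y.1 : K)) = 0 := y.2
      rwa [← htr] at h⟩,
     fun x => rfl, fun y => rfl⟩
  have hsncard : s.ncard = q ^ (m - ℓ - 1) := by
    rw [← Nat.card_coe_set_eq, Nat.card_congr e3, hcount1, hcardW', NU, ← pow_add]
    congr 1
    omega
  have h0mem : (0 : K) ∈ s := ⟨V.zero_mem, by simp⟩
  have hsets : {x : K | x ≠ 0 ∧ Algebra.trace F K (x ^ 2) = 0 ∧
      ∀ i : Fin ((m - 1) / 2), (i : ℕ) < ℓ → Algebra.trace F K (x * a i) = 0} = s \ {0} := by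
    ext x
    simp only [Set.mem_setOf_eq, Set.mem_diff, Set.mem_singleton_iff, hs]
    constructor
    · rintro ⟨h0, htr2, hcond⟩
      exact ⟨⟨(hmemV x).mpr hcond, htr2⟩, h0⟩
    · rintro ⟨⟨hv, htr2⟩, h0⟩
      exact ⟨h0, htr2, (hmemV x).mp hv⟩
  calc Nat.card {x : K // x ≠ 0 ∧ Algebra.trace F K (x ^ 2) = 0 ∧
          ∀ i : Fin ((m - 1) / 2), (i : ℕ) < ℓ → Algebra.trace F K (x * a i) = 0}
      = Set.ncard {x : K | x ≠ 0 ∧ Algebra.trace F K (x ^ 2) = 0 ∧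
          ∀ i : Fin ((m - 1) / 2), (i : ℕ) < ℓ → Algebra.trace F K (x * a i) = 0} :=
        Nat.card_coe_set_eq _
    _ = (s \ {0}).ncard := by rw [hsets]
    _ = s.ncard - 1 := Set.ncard_diff_singleton_of_mem h0mem
    _ = q ^ (m - ℓ - 1) - 1 := by rw [hsncard]
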